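/- Let H = A #_ψ^φ B be a cross product bialgebra over a commutative ring k. The map ψ is left and right conormal (i.e. (ε_A⊗id_B)ψ(b⊗a) = ε_A(a) b and (id_A⊗ε_B)ψ(b⊗a) = ε_B(b) a for all a,b) if and only if ψ is the flip map, ψ(b⊗a) = a⊗b. -/

import Mathlib

open TensorProduct

variable {k A B : Type*} [CommRing k] [Ring A] [Ring B] [Algebra k A] [Algebra k B]
  [Coalgebra k A] [Coalgebra k B]

/-- The cross product multiplication on `A ⊗ B` induced by `ψ : B ⊗ A → A ⊗ B`. -/
noncomputable def crossMul (ψ : B ⊗[k] A →ₗ[k] A ⊗[k] B) :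
    (A ⊗[k] B) ⊗[k] (A ⊗[k] B) →ₗ[k] A ⊗[k] B :=
  TensorProduct.map (LinearMap.mul' k A) (LinearMap.mul' k B) ∘ₗ
    (TensorProduct.assoc k (A ⊗[k] A) B B).toLinearMap ∘ₗ
    TensorProduct.map
      ((TensorProduct.assoc k A A B).symm.toLinearMap ∘ₗ
        TensorProduct.map (LinearMap.id : A →ₗ[k] A) ψ ∘ₗ
        (TensorProduct.assoc k A B A).toLinearMap)
      (LinearMap.id : B →ₗ[k] B) ∘ₗ
    (TensorProduct.assoc k (A ⊗[k] B) A B).symm.toLinearMap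

/-- (a): `ψ ∘ (m_B ⊗ id_A) = (id_A ⊗ m_B) ∘ (ψ ⊗ id_B) ∘ (id_B ⊗ ψ)`. -/
def psiCondA (ψ : B ⊗[k] A →ₗ[k] A ⊗[k] B) : Prop :=
  ψ ∘ₗ TensorProduct.map (LinearMap.mul' k B) (LinearMap.id : A →ₗ[k] A) =
    TensorProduct.map (LinearMap.id : A →ₗ[k] A) (LinearMap.mul' k B) ∘ₗ
      (TensorProduct.assoc k A B B).toLinearMap ∘ₗ
      TensorProduct.map ψ (LinearMap.id : B →ₗ[k] B) ∘ₗ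
      (TensorProduct.assoc k B A B).symm.toLinearMap ∘ₗ
      TensorProduct.map (LinearMap.id : B →ₗ[k] B) ψ ∘ₗ
      (TensorProduct.assoc k B B A).toLinearMap

/-- (b): `ψ ∘ (id_B ⊗ m_A) = (m_A ⊗ id_B) ∘ (id_A ⊗ ψ) ∘ (ψ ⊗ id_A)`. -/
def psiCondB (ψ : B ⊗[k] A →ₗ[k] A ⊗[k] B) : Prop :=
  ψ ∘ₗ TensorProduct.map (LinearMap.id : B →ₗ[k] B) (LinearMap.mul' k A) =
    TensorProduct.map (LinearMap.mul' k A) (LinearMap.id : B →ₗ[k] B) ∘ₗ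
      (TensorProduct.assoc k A A B).symm.toLinearMap ∘ₗ
      TensorProduct.map (LinearMap.id : A →ₗ[k] A) ψ ∘ₗ
      (TensorProduct.assoc k A B A).toLinearMap ∘ₗ
      TensorProduct.map ψ (LinearMap.id : A →ₗ[k] A) ∘ₗ
      (TensorProduct.assoc k B A A).symm.toLinearMap

/-- (c): `ψ(b ⊗ 1_A) = 1_A ⊗ b`. -/
def psiCondC (ψ : B ⊗[k] A →ₗ[k] A ⊗[k] B) : Prop :=
  ∀ b : B, ψ (b ⊗ₜ[k] (1 : A)) = (1 : A) ⊗ₜ[k] b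

/-- (d): `ψ(1_B ⊗ a) = a ⊗ 1_B`. -/
def psiCondD (ψ : B ⊗[k] A →ₗ[k] A ⊗[k] B) : Prop :=
  ∀ a : A, ψ ((1 : B) ⊗ₜ[k] a) = a ⊗ₜ[k] (1 : B)

/-- The cross coproduct comultiplication on `A ⊗ B` induced by `φ : A ⊗ B → B ⊗ A`. -/
noncomputable def crossComul (φ : A ⊗[k] B →ₗ[k] B ⊗[k] A) :
    A ⊗[k] B →ₗ[k] (A ⊗[k] B) ⊗[k] (A ⊗[k] B) :=
  (TensorProduct.assoc k (A ⊗[k] B) A B).toLinearMap ∘ₗ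
    TensorProduct.map
      ((TensorProduct.assoc k A B A).symm.toLinearMap ∘ₗ
        TensorProduct.map (LinearMap.id : A →ₗ[k] A) φ ∘ₗ
        (TensorProduct.assoc k A A B).toLinearMap)
      (LinearMap.id : B →ₗ[k] B) ∘ₗ
    (TensorProduct.assoc k (A ⊗[k] A) B B).symm.toLinearMap ∘ₗ
    TensorProduct.map (Coalgebra.comul (R := k) (A := A)) (Coalgebra.comul (R := k) (A := B))

/-- The counit `ε_A ⊗ ε_B` on `A ⊗ B`. -/
noncomputable def crossCounit : A ⊗[k] B →ₗ[k] k :=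
  (TensorProduct.lid k k).toLinearMap ∘ₗ
    TensorProduct.map (Coalgebra.counit (R := k) (A := A)) (Coalgebra.counit (R := k) (A := B))

/-- (a): `(Δ_B ⊗ id_A) ∘ φ = (id_B ⊗ φ) ∘ (φ ⊗ id_B) ∘ (id_A ⊗ Δ_B)`. -/
def phiCondA (φ : A ⊗[k] B →ₗ[k] B ⊗[k] A) : Prop :=
  TensorProduct.map (Coalgebra.comul (R := k) (A := B)) (LinearMap.id : A →ₗ[k] A) ∘ₗ φ =
    (TensorProduct.assoc k B B A).symm.toLinearMap ∘ₗ
      TensorProduct.map (LinearMap.id : B →ₗ[k] B) φ ∘ₗ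
      (TensorProduct.assoc k B A B).toLinearMap ∘ₗ
      TensorProduct.map φ (LinearMap.id : B →ₗ[k] B) ∘ₗ
      (TensorProduct.assoc k A B B).symm.toLinearMap ∘ₗ
      TensorProduct.map (LinearMap.id : A →ₗ[k] A) (Coalgebra.comul (R := k) (A := B))

/-- (b): `(id_B ⊗ Δ_A) ∘ φ = (φ ⊗ id_A) ∘ (id_A ⊗ φ) ∘ (Δ_A ⊗ id_B)`. -/
def phiCondB (φ : A ⊗[k] B →ₗ[k] B ⊗[k] A) : Prop :=
  TensorProduct.map (LinearMap.id : B →ₗ[k] B) (Coalgebra.comul (R := k) (A := A)) ∘ₗ φ =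
    (TensorProduct.assoc k B A A).toLinearMap ∘ₗ
      TensorProduct.map φ (LinearMap.id : A →ₗ[k] A) ∘ₗ
      (TensorProduct.assoc k A B A).symm.toLinearMap ∘ₗ
      TensorProduct.map (LinearMap.id : A →ₗ[k] A) φ ∘ₗ
      (TensorProduct.assoc k A A B).toLinearMap ∘ₗ
      TensorProduct.map (Coalgebra.comul (R := k) (A := A)) (LinearMap.id : B →ₗ[k] B)

/-- (c): `(id_B ⊗ ε_A) ∘ φ = ε_A ⊗ id_B`. -/
def phiCondC (φ : A ⊗[k] B →ₗ[k] B ⊗[k] A) : Prop :=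
  (TensorProduct.rid k B).toLinearMap ∘ₗ
      TensorProduct.map (LinearMap.id : B →ₗ[k] B) (Coalgebra.counit (R := k) (A := A)) ∘ₗ φ =
    (TensorProduct.lid k B).toLinearMap ∘ₗ
      TensorProduct.map (Coalgebra.counit (R := k) (A := A)) (LinearMap.id : B →ₗ[k] B)

/-- (d): `(ε_B ⊗ id_A) ∘ φ = id_A ⊗ ε_B`. -/
def phiCondD (φ : A ⊗[k] B →ₗ[k] B ⊗[k] A) : Prop :=
  (TensorProduct.lid k A).toLinearMap ∘ₗ
      TensorProduct.map (Coalgebra.counit (R := k) (A := B)) (LinearMap.id : A →ₗ[k] A) ∘ₗ φ =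
    (TensorProduct.rid k A).toLinearMap ∘ₗ
      TensorProduct.map (LinearMap.id : A →ₗ[k] A) (Coalgebra.counit (R := k) (A := B))

/-- `A ⊗ B` with the cross product multiplication induced by `ψ`, unit `1 ⊗ 1`, the cross
coproduct comultiplication induced by `φ` and counit `ε_A ⊗ ε_B` is a bialgebra. -/
def IsCrossBialgebra (ψ : B ⊗[k] A →ₗ[k] A ⊗[k] B) (φ : A ⊗[k] B →ₗ[k] B ⊗[k] A) : Prop :=
  (∀ x y z : A ⊗[k] B,
      crossMul ψ (crossMul ψ (x ⊗ₜ[k] y) ⊗ₜ[k] z) =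
        crossMul ψ (x ⊗ₜ[k] crossMul ψ (y ⊗ₜ[k] z))) ∧
  (∀ x : A ⊗[k] B, crossMul ψ (((1 : A) ⊗ₜ[k] (1 : B)) ⊗ₜ[k] x) = x) ∧
  (∀ x : A ⊗[k] B, crossMul ψ (x ⊗ₜ[k] ((1 : A) ⊗ₜ[k] (1 : B))) = x) ∧
  ((TensorProduct.assoc k (A ⊗[k] B) (A ⊗[k] B) (A ⊗[k] B)).toLinearMap ∘ₗ
      TensorProduct.map (crossComul φ) (LinearMap.id : A ⊗[k] B →ₗ[k] A ⊗[k] B) ∘ₗ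
        crossComul φ =
      TensorProduct.map (LinearMap.id : A ⊗[k] B →ₗ[k] A ⊗[k] B) (crossComul φ) ∘ₗ
        crossComul φ) ∧
  ((TensorProduct.lid k (A ⊗[k] B)).toLinearMap ∘ₗ
      TensorProduct.map (crossCounit (k := k) (A := A) (B := B))
        (LinearMap.id : A ⊗[k] B →ₗ[k] A ⊗[k] B) ∘ₗ crossComul φ = LinearMap.id) ∧
  ((TensorProduct.rid k (A ⊗[k] B)).toLinearMap ∘ₗ
      TensorProduct.map (LinearMap.id : A ⊗[k] B →ₗ[k] A ⊗[k] B)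
        (crossCounit (k := k) (A := A) (B := B)) ∘ₗ crossComul φ = LinearMap.id) ∧
  (crossComul φ ((1 : A) ⊗ₜ[k] (1 : B)) =
      ((1 : A) ⊗ₜ[k] (1 : B)) ⊗ₜ[k] ((1 : A) ⊗ₜ[k] (1 : B))) ∧
  (crossCounit (k := k) (A := A) (B := B) ((1 : A) ⊗ₜ[k] (1 : B)) = 1) ∧
  (crossComul φ ∘ₗ crossMul ψ =
      TensorProduct.map (crossMul ψ) (crossMul ψ) ∘ₗ
        (TensorProduct.tensorTensorTensorComm k (A ⊗[k] B) (A ⊗[k] B) (A ⊗[k] B)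
          (A ⊗[k] B)).toLinearMap ∘ₗ
        TensorProduct.map (crossComul φ) (crossComul φ)) ∧
  (crossCounit (k := k) (A := A) (B := B) ∘ₗ crossMul ψ =
      LinearMap.mul' k k ∘ₗ
        TensorProduct.map (crossCounit (k := k) (A := A) (B := B))
          (crossCounit (k := k) (A := A) (B := B)))

section CPaux
set_option maxHeartbeats 1000000
set_option synthInstance.maxHeartbeats 400000
set_option linter.unusedSectionVars false

/-- projection `A ⊗ B → A`, `a ⊗ b ↦ ε_B(b) • a`. -/
noncomputable def cpA : A ⊗[k] B →ₗ[k] A :=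
  (TensorProduct.rid k A).toLinearMap ∘ₗ
    TensorProduct.map (LinearMap.id : A →ₗ[k] A) (Coalgebra.counit (R := k) (A := B))

/-- projection `A ⊗ B → B`, `a ⊗ b ↦ ε_A(a) • b`. -/
noncomputable def cpB : A ⊗[k] B →ₗ[k] B :=
  (TensorProduct.lid k B).toLinearMap ∘ₗ
    TensorProduct.map (Coalgebra.counit (R := k) (A := A)) (LinearMap.id : B →ₗ[k] B)

/-- `B ⊗ A → A`, `b ⊗ a ↦ ε_B(b) • a`. -/
noncomputable def cqA : B ⊗[k] A →ₗ[k] A :=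
  (TensorProduct.lid k A).toLinearMap ∘ₗ
    TensorProduct.map (Coalgebra.counit (R := k) (A := B)) (LinearMap.id : A →ₗ[k] A)

/-- `B ⊗ A → k`, `b ⊗ a ↦ ε_B(b) * ε_A(a)`. -/
noncomputable def cKK : B ⊗[k] A →ₗ[k] k :=
  LinearMap.mul' k k ∘ₗ
    TensorProduct.map (Coalgebra.counit (R := k) (A := B)) (Coalgebra.counit (R := k) (A := A))

/-- `B ⊗ A → (A ⊗ B) ⊗ (A ⊗ B)`, `s ⊗ t ↦ (x ⊗ s) ⊗ (t ⊗ v)`. -/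
noncomputable def cNN (x : A) (v : B) : B ⊗[k] A →ₗ[k] (A ⊗[k] B) ⊗[k] (A ⊗[k] B) :=
  TensorProduct.map (TensorProduct.mk k A B x) ((TensorProduct.mk k A B).flip v)

@[simp] lemma cpA_tmul (a : A) (b : B) :
    cpA (a ⊗ₜ[k] b) = Coalgebra.counit (R := k) b • a := by
  simp [cpA]

@[simp] lemma cpB_tmul (a : A) (b : B) :
    cpB (a ⊗ₜ[k] b) = Coalgebra.counit (R := k) a • b := by
  simp [cpB]

@[simp] lemma cqA_tmul (b : B) (a : A) :
    cqA (b ⊗ₜ[k] a) = Coalgebra.counit (R := k) b • a := by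
  simp [cqA]

@[simp] lemma cKK_tmul (b : B) (a : A) :
    cKK (b ⊗ₜ[k] a) = Coalgebra.counit (R := k) b * Coalgebra.counit (R := k) a := by
  simp [cKK]

@[simp] lemma cNN_tmul (x : A) (v : B) (s : B) (t : A) :
    cNN x v (s ⊗ₜ[k] t) = (x ⊗ₜ[k] s) ⊗ₜ[k] (t ⊗ₜ[k] v) := by
  simp [cNN]

@[simp] lemma crossCounit_tmul (a : A) (b : B) :
    crossCounit (k := k) (a ⊗ₜ[k] b) =
      Coalgebra.counit (R := k) a * Coalgebra.counit (R := k) b := by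
  simp [crossCounit, smul_eq_mul]

lemma repr_counit_right_smul {a : A} {ι : Type*} (r : Coalgebra.Repr k a ι) :
    ∑ i ∈ r.index, Coalgebra.counit (R := k) (r.right i) • r.left i = a := by
  have h := congrArg (TensorProduct.rid k A) (Coalgebra.sum_tmul_counit_eq r)
  rw [map_sum] at h
  simpa using h

lemma repr_counit_left_smul {a : A} {ι : Type*} (r : Coalgebra.Repr k a ι) :
    ∑ i ∈ r.index, Coalgebra.counit (R := k) (r.left i) • r.right i = a := by
  have h := congrArg (TensorProduct.lid k A) (Coalgebra.sum_counit_tmul_eq r)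
  rw [map_sum] at h
  simpa using h

lemma cp_auxMul (ψ : B ⊗[k] A →ₗ[k] A ⊗[k] B) (a : A) (b' : B) (w : A ⊗[k] B) :
    (TensorProduct.map (LinearMap.mul' k A) (LinearMap.mul' k B))
      ((TensorProduct.assoc k (A ⊗[k] A) B B)
        ((((TensorProduct.assoc k A A B).symm) (a ⊗ₜ[k] w)) ⊗ₜ[k] b')) =
    TensorProduct.map (LinearMap.mulLeft k a) (LinearMap.mulRight k b') w := by
  induction w using TensorProduct.induction_on with
  | zero => simp
  | tmul u v => simp
  | add u v hu hv => simp [tmul_add, add_tmul, hu, hv]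

lemma crossMul_tmul (ψ : B ⊗[k] A →ₗ[k] A ⊗[k] B) (a a' : A) (b b' : B) :
    crossMul ψ ((a ⊗ₜ[k] b) ⊗ₜ[k] (a' ⊗ₜ[k] b')) =
      TensorProduct.map (LinearMap.mulLeft k a) (LinearMap.mulRight k b') (ψ (b ⊗ₜ[k] a')) := by
  have := cp_auxMul (k := k) ψ a b' -- not used directly; kept
  simp only [crossMul, LinearMap.coe_comp, Function.comp_apply, LinearEquiv.coe_coe,
    TensorProduct.assoc_symm_tmul, TensorProduct.map_tmul, LinearMap.id_coe, id_eq,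
    TensorProduct.assoc_tmul]
  exact cp_auxMul ψ a b' (ψ (b ⊗ₜ[k] a'))

lemma cp_auxComul (φ : A ⊗[k] B →ₗ[k] B ⊗[k] A) (x : A) (v : B) (w : B ⊗[k] A) :
    (TensorProduct.assoc k (A ⊗[k] B) A B)
      ((((TensorProduct.assoc k A B A).symm) (x ⊗ₜ[k] w)) ⊗ₜ[k] v) = cNN x v w := by
  induction w using TensorProduct.induction_on with
  | zero => simp
  | tmul s t => simp
  | add u v' hu hv => simp [tmul_add, add_tmul, hu, hv]

lemma crossComul_repr (φ : A ⊗[k] B →ₗ[k] B ⊗[k] A) {a : A} {b : B} {ι₁ ι₂ : Type*}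
    (ra : Coalgebra.Repr k a ι₁) (rb : Coalgebra.Repr k b ι₂) :
    crossComul φ (a ⊗ₜ[k] b) =
      ∑ i ∈ ra.index, ∑ j ∈ rb.index,
        cNN (ra.left i) (rb.right j) (φ (ra.right i ⊗ₜ[k] rb.left j)) := by
  simp only [crossComul, LinearMap.coe_comp, Function.comp_apply, LinearEquiv.coe_coe,
    TensorProduct.map_tmul]
  rw [← ra.eq, ← rb.eq]
  rw [TensorProduct.sum_tmul]
  rw [map_sum, map_sum, map_sum]
  refine Finset.sum_congr rfl fun i _ => ?_
  rw [TensorProduct.tmul_sum, map_sum, map_sum, map_sum]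
  refine Finset.sum_congr rfl fun j _ => ?_
  simp only [TensorProduct.assoc_symm_tmul, TensorProduct.map_tmul, LinearMap.coe_comp,
    Function.comp_apply, LinearEquiv.coe_coe, TensorProduct.assoc_tmul, LinearMap.id_coe, id_eq]
  exact cp_auxComul φ _ _ _

lemma cp_aux5 (x : A) (v : B) (w : B ⊗[k] A) :
    (TensorProduct.lid k (A ⊗[k] B))
      ((TensorProduct.map (crossCounit (k := k) (A := A) (B := B))
        (LinearMap.id : A ⊗[k] B →ₗ[k] A ⊗[k] B)) (cNN x v w)) =
    Coalgebra.counit (R := k) x • (cqA w ⊗ₜ[k] v) := by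
  induction w using TensorProduct.induction_on with
  | zero => simp
  | tmul s t =>
      simp only [cNN_tmul, TensorProduct.map_tmul, LinearMap.id_coe, id_eq, crossCounit_tmul,
        TensorProduct.lid_tmul, cqA_tmul, ← TensorProduct.smul_tmul', smul_smul]
  | add u v' hu hv => simp [tmul_add, add_tmul, hu, hv, smul_add]

lemma cp_smul_smul_tmul (s1 s2 : k) (x : A) (v : B) :
    (s1 • x) ⊗ₜ[k] (s2 • v) = (s2 * s1) • (x ⊗ₜ[k] v) := by
  rw [TensorProduct.tmul_smul, ← TensorProduct.smul_tmul', smul_smul]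

lemma cp_sum_smul_tmul {ι₁ ι₂ : Type*} (S : Finset ι₁) (T : Finset ι₂)
    (α : ι₁ → k) (x : ι₁ → A) (β : ι₂ → k) (v : ι₂ → B) :
    ∑ i ∈ S, ∑ j ∈ T, (β j * α i) • (x i ⊗ₜ[k] v j) =
      (∑ i ∈ S, α i • x i) ⊗ₜ[k] (∑ j ∈ T, β j • v j) := by
  rw [TensorProduct.sum_tmul]
  refine Finset.sum_congr rfl fun i _ => ?_
  rw [TensorProduct.tmul_sum]
  refine Finset.sum_congr rfl fun j _ => ?_
  rw [cp_smul_smul_tmul]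

lemma cp_auxF (x : A) (v : B) (w : B ⊗[k] A) :
    TensorProduct.map (cpA (k := k)) (cpB (k := k)) (cNN x v w) = cKK w • (x ⊗ₜ[k] v) := by
  induction w using TensorProduct.induction_on with
  | zero => simp
  | tmul s t =>
      rw [cNN_tmul, TensorProduct.map_tmul, cpA_tmul, cpB_tmul, cp_smul_smul_tmul, cKK_tmul,
        mul_comm]
  | add u v' hu hv => simp [hu, hv, add_smul]

lemma cp_counit_cqA (w : B ⊗[k] A) :
    Coalgebra.counit (R := k) (cqA w) = cKK w := by
  induction w using TensorProduct.induction_on with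
  | zero => simp
  | tmul s t => simp [smul_eq_mul]
  | add u v hu hv => simp [hu, hv]

lemma cp_d4 (φ : A ⊗[k] B →ₗ[k] B ⊗[k] A)
    (h5 : (TensorProduct.lid k (A ⊗[k] B)).toLinearMap ∘ₗ
      TensorProduct.map (crossCounit (k := k) (A := A) (B := B))
        (LinearMap.id : A ⊗[k] B →ₗ[k] A ⊗[k] B) ∘ₗ crossComul φ = LinearMap.id)
    (a : A) (b : B) :
    cqA (φ (a ⊗ₜ[k] b)) = Coalgebra.counit (R := k) b • a := by
  set ra := Coalgebra.Repr.arbitrary k a with hra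
  set rb := Coalgebra.Repr.arbitrary k b with hrb
  have h := LinearMap.congr_fun h5 (a ⊗ₜ[k] b)
  rw [LinearMap.comp_apply, LinearMap.comp_apply, LinearMap.id_apply,
    crossComul_repr φ ra rb, map_sum, map_sum] at h
  simp only [map_sum, LinearEquiv.coe_coe] at h
  rw [Finset.sum_comm] at h
  have h' : ∑ j ∈ rb.index, cqA (φ (a ⊗ₜ[k] rb.left j)) ⊗ₜ[k] rb.right j = a ⊗ₜ[k] b := by
    rw [← h]
    refine Finset.sum_congr rfl fun j _ => ?_
    have hterm : ∀ i ∈ ra.index,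
        (TensorProduct.lid k (A ⊗[k] B))
          ((TensorProduct.map (crossCounit (k := k) (A := A) (B := B)) LinearMap.id)
            (cNN (ra.left i) (rb.right j) (φ (ra.right i ⊗ₜ[k] rb.left j)))) =
        cqA (φ ((Coalgebra.counit (R := k) (ra.left i) • ra.right i) ⊗ₜ[k] rb.left j))
          ⊗ₜ[k] rb.right j := by
      intro i _
      rw [cp_aux5, TensorProduct.smul_tmul', ← LinearMap.map_smul, ← LinearMap.map_smul,
        TensorProduct.smul_tmul']
    rw [Finset.sum_congr rfl hterm, ← TensorProduct.sum_tmul]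
    congr 2
    conv_lhs => rw [← repr_counit_left_smul ra]
    rw [TensorProduct.sum_tmul, map_sum, map_sum]
  have h2 := congrArg (cpA (k := k)) h'
  rw [map_sum, cpA_tmul] at h2
  have hterm2 : ∀ j ∈ rb.index,
      cpA (cqA (φ (a ⊗ₜ[k] rb.left j)) ⊗ₜ[k] rb.right j) =
      cqA (φ (a ⊗ₜ[k] (Coalgebra.counit (R := k) (rb.right j) • rb.left j))) := by
    intro j _
    rw [cpA_tmul, ← LinearMap.map_smul, ← LinearMap.map_smul, TensorProduct.tmul_smul]
  rw [← h2, Finset.sum_congr rfl hterm2]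
  conv_lhs => rw [← repr_counit_right_smul rb]
  rw [TensorProduct.tmul_sum, map_sum, map_sum]

lemma cp_d6 (φ : A ⊗[k] B →ₗ[k] B ⊗[k] A)
    (h5 : (TensorProduct.lid k (A ⊗[k] B)).toLinearMap ∘ₗ
      TensorProduct.map (crossCounit (k := k) (A := A) (B := B))
        (LinearMap.id : A ⊗[k] B →ₗ[k] A ⊗[k] B) ∘ₗ crossComul φ = LinearMap.id)
    (a : A) (b : B) :
    cKK (φ (a ⊗ₜ[k] b)) =
      Coalgebra.counit (R := k) b * Coalgebra.counit (R := k) a := by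
  rw [← cp_counit_cqA, cp_d4 φ h5, map_smul, smul_eq_mul]

lemma cp_hF (φ : A ⊗[k] B →ₗ[k] B ⊗[k] A)
    (h5 : (TensorProduct.lid k (A ⊗[k] B)).toLinearMap ∘ₗ
      TensorProduct.map (crossCounit (k := k) (A := A) (B := B))
        (LinearMap.id : A ⊗[k] B →ₗ[k] A ⊗[k] B) ∘ₗ crossComul φ = LinearMap.id)
    (z : A ⊗[k] B) :
    TensorProduct.map (cpA (k := k)) (cpB (k := k)) (crossComul φ z) = z := by
  induction z using TensorProduct.induction_on with
  | zero => simp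
  | add u v hu hv => simp [hu, hv]
  | tmul a b =>
      set ra := Coalgebra.Repr.arbitrary k a
      set rb := Coalgebra.Repr.arbitrary k b
      rw [crossComul_repr φ ra rb, map_sum]
      simp only [map_sum]
      have : ∀ i ∈ ra.index, ∀ j ∈ rb.index,
          TensorProduct.map (cpA (k := k)) (cpB (k := k))
            (cNN (ra.left i) (rb.right j) (φ (ra.right i ⊗ₜ[k] rb.left j))) =
          (Coalgebra.counit (R := k) (rb.left j) * Coalgebra.counit (R := k) (ra.right i)) •
            (ra.left i ⊗ₜ[k] rb.right j) := by
        intro i _ j _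
        rw [cp_auxF, cp_d6 φ h5]
      calc ∑ i ∈ ra.index, ∑ j ∈ rb.index,
          TensorProduct.map (cpA (k := k)) (cpB (k := k))
            (cNN (ra.left i) (rb.right j) (φ (ra.right i ⊗ₜ[k] rb.left j)))
          = ∑ i ∈ ra.index, ∑ j ∈ rb.index,
            (Coalgebra.counit (R := k) (rb.left j) * Coalgebra.counit (R := k) (ra.right i)) •
              (ra.left i ⊗ₜ[k] rb.right j) := by
            exact Finset.sum_congr rfl fun i hi => Finset.sum_congr rfl fun j hj => this i hi j hj
        _ = (∑ i ∈ ra.index, Coalgebra.counit (R := k) (ra.right i) • ra.left i) ⊗ₜ[k]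
              (∑ j ∈ rb.index, Coalgebra.counit (R := k) (rb.left j) • rb.right j) :=
            cp_sum_smul_tmul _ _ _ _ _ _
        _ = a ⊗ₜ[k] b := by rw [repr_counit_right_smul ra, repr_counit_left_smul rb]

lemma cp_sum_smul_mul {M : Type*} [Ring M] [Algebra k M] {ι₁ ι₂ : Type*}
    (S : Finset ι₁) (T : Finset ι₂) (α : ι₁ → k) (x : ι₁ → M) (γ : ι₂ → k) (y : ι₂ → M) :
    ∑ i ∈ S, ∑ r ∈ T, (α i * γ r) • (x i * y r) =
      (∑ i ∈ S, α i • x i) * (∑ r ∈ T, γ r • y r) := by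
  rw [Finset.sum_mul_sum]
  refine Finset.sum_congr rfl fun i _ => Finset.sum_congr rfl fun r _ => ?_
  rw [smul_mul_smul_comm]

lemma cp_factor {ι₁ ι₂ ι₃ ι₄ : Type*} (S₁ : Finset ι₁) (S₂ : Finset ι₂) (S₃ : Finset ι₃)
    (S₄ : Finset ι₄) (α : ι₁ → k) (c : ι₁ → A) (β : ι₂ → k) (b2 : ι₂ → B)
    (γ : ι₃ → k) (a1 : ι₃ → A) (δ : ι₄ → k) (f : ι₄ → B) :
    ∑ i ∈ S₁, ∑ j ∈ S₂, ∑ r ∈ S₃, ∑ l ∈ S₄,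
      ((β j * α i) * (δ l * γ r)) • ((c i * a1 r) ⊗ₜ[k] (b2 j * f l)) =
    ((∑ i ∈ S₁, α i • c i) * (∑ r ∈ S₃, γ r • a1 r)) ⊗ₜ[k]
      ((∑ j ∈ S₂, β j • b2 j) * (∑ l ∈ S₄, δ l • f l)) := by
  calc ∑ i ∈ S₁, ∑ j ∈ S₂, ∑ r ∈ S₃, ∑ l ∈ S₄,
      ((β j * α i) * (δ l * γ r)) • ((c i * a1 r) ⊗ₜ[k] (b2 j * f l))
      = ∑ i ∈ S₁, ∑ j ∈ S₂, ∑ r ∈ S₃, ∑ l ∈ S₄,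
        ((α i * γ r) • (c i * a1 r)) ⊗ₜ[k] ((β j * δ l) • (b2 j * f l)) := by
        refine Finset.sum_congr rfl fun i _ => Finset.sum_congr rfl fun j _ =>
          Finset.sum_congr rfl fun r _ => Finset.sum_congr rfl fun l _ => ?_
        rw [cp_smul_smul_tmul,
          show (β j * δ l) * (α i * γ r) = (β j * α i) * (δ l * γ r) from by ring]
    _ = ∑ i ∈ S₁, ∑ j ∈ S₂,
          (∑ r ∈ S₃, (α i * γ r) • (c i * a1 r)) ⊗ₜ[k]
            (∑ l ∈ S₄, (β j * δ l) • (b2 j * f l)) := by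
        refine Finset.sum_congr rfl fun i _ => Finset.sum_congr rfl fun j _ => ?_
        rw [TensorProduct.sum_tmul]
        exact Finset.sum_congr rfl fun r _ => (TensorProduct.tmul_sum _ _ _).symm
    _ = (∑ i ∈ S₁, ∑ r ∈ S₃, (α i * γ r) • (c i * a1 r)) ⊗ₜ[k]
          (∑ j ∈ S₂, ∑ l ∈ S₄, (β j * δ l) • (b2 j * f l)) := by
        rw [TensorProduct.sum_tmul]
        exact Finset.sum_congr rfl fun i _ => (TensorProduct.tmul_sum _ _ _).symm
    _ = ((∑ i ∈ S₁, α i • c i) * (∑ r ∈ S₃, γ r • a1 r)) ⊗ₜ[k]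
          ((∑ j ∈ S₂, β j • b2 j) * (∑ l ∈ S₄, δ l • f l)) := by
        rw [cp_sum_smul_mul, cp_sum_smul_mul]

lemma cp_L1 (hmB : ∀ b b' : B, Coalgebra.counit (R := k) (b * b') =
      Coalgebra.counit (R := k) (1 : A) *
        (Coalgebra.counit (R := k) b * Coalgebra.counit (R := k) b'))
    (x : A) (p : B) (z : A ⊗[k] B) :
    cpA (TensorProduct.map (LinearMap.mulLeft k x) (LinearMap.mulRight k p) z) =
      (Coalgebra.counit (R := k) (1 : A) * Coalgebra.counit (R := k) p) • (x * cpA z) := by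
  induction z using TensorProduct.induction_on with
  | zero => simp
  | add u v hu hv => simp [hu, hv, mul_add, smul_add]
  | tmul m n =>
      simp only [TensorProduct.map_tmul, LinearMap.mulLeft_apply, LinearMap.mulRight_apply,
        cpA_tmul]
      rw [hmB, mul_smul_comm, smul_smul,
        show Coalgebra.counit (R := k) (1 : A) *
            (Coalgebra.counit (R := k) n * Coalgebra.counit (R := k) p) =
          Coalgebra.counit (R := k) (1 : A) * Coalgebra.counit (R := k) p *
            Coalgebra.counit (R := k) n from by ring]

lemma cp_L2 (hmA : ∀ a a' : A, Coalgebra.counit (R := k) (a * a') =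
      Coalgebra.counit (R := k) (1 : B) *
        (Coalgebra.counit (R := k) a * Coalgebra.counit (R := k) a'))
    (t : A) (v' : B) (z : A ⊗[k] B) :
    cpB (TensorProduct.map (LinearMap.mulLeft k t) (LinearMap.mulRight k v') z) =
      (Coalgebra.counit (R := k) (1 : B) * Coalgebra.counit (R := k) t) • (cpB z * v') := by
  induction z using TensorProduct.induction_on with
  | zero => simp
  | add u v hu hv => simp [hu, hv, add_mul, smul_add]
  | tmul m n =>
      simp only [TensorProduct.map_tmul, LinearMap.mulLeft_apply, LinearMap.mulRight_apply,
        cpB_tmul]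
      rw [hmA, smul_mul_assoc, smul_smul,
        show Coalgebra.counit (R := k) (1 : B) *
            (Coalgebra.counit (R := k) t * Coalgebra.counit (R := k) m) =
          Coalgebra.counit (R := k) (1 : B) * Coalgebra.counit (R := k) t *
            Coalgebra.counit (R := k) m from by ring]

lemma cp_quad (ψ : B ⊗[k] A →ₗ[k] A ⊗[k] B)
    (hP : ∀ (b : B) (a : A), cpA (ψ (b ⊗ₜ[k] a)) = Coalgebra.counit (R := k) b • a)
    (hQ : ∀ (b : B) (a : A), cpB (ψ (b ⊗ₜ[k] a)) = Coalgebra.counit (R := k) a • b)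
    (hmA : ∀ a a' : A, Coalgebra.counit (R := k) (a * a') =
      Coalgebra.counit (R := k) (1 : B) *
        (Coalgebra.counit (R := k) a * Coalgebra.counit (R := k) a'))
    (hmB : ∀ b b' : B, Coalgebra.counit (R := k) (b * b') =
      Coalgebra.counit (R := k) (1 : A) *
        (Coalgebra.counit (R := k) b * Coalgebra.counit (R := k) b'))
    (x x' : A) (v v' : B) (w w' : B ⊗[k] A) :
    TensorProduct.map (cpA (k := k)) (cpB (k := k))
      ((TensorProduct.map (crossMul ψ) (crossMul ψ))
        ((TensorProduct.tensorTensorTensorComm k (A ⊗[k] B) (A ⊗[k] B) (A ⊗[k] B) (A ⊗[k] B))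
          ((cNN x v w) ⊗ₜ[k] (cNN x' v' w')))) =
    ((Coalgebra.counit (R := k) (1 : A) * Coalgebra.counit (R := k) (1 : B)) *
        (cKK w * cKK w')) • ((x * x') ⊗ₜ[k] (v * v')) := by
  induction w using TensorProduct.induction_on with
  | zero => simp
  | add u u' hu hu' =>
      simp only [map_add, TensorProduct.add_tmul, hu, hu', mul_add, add_mul, add_smul]
  | tmul s t =>
      induction w' using TensorProduct.induction_on with
      | zero => simp
      | add u u' hu hu' =>
          simp only [map_add, TensorProduct.tmul_add, hu, hu', mul_add, add_smul]
      | tmul p q =>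
          rw [cNN_tmul, cNN_tmul, TensorProduct.tensorTensorTensorComm_tmul,
            TensorProduct.map_tmul, crossMul_tmul, crossMul_tmul, TensorProduct.map_tmul,
            cp_L1 hmB, cp_L2 hmA, hP, hQ, mul_smul_comm, smul_mul_assoc, smul_smul, smul_smul,
            cp_smul_smul_tmul, cKK_tmul, cKK_tmul,
            show Coalgebra.counit (R := k) (1 : B) * Coalgebra.counit (R := k) t *
                Coalgebra.counit (R := k) q *
                (Coalgebra.counit (R := k) (1 : A) * Coalgebra.counit (R := k) p *
                  Coalgebra.counit (R := k) s) =
              Coalgebra.counit (R := k) (1 : A) * Coalgebra.counit (R := k) (1 : B) *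
                (Coalgebra.counit (R := k) s * Coalgebra.counit (R := k) t *
                  (Coalgebra.counit (R := k) p * Coalgebra.counit (R := k) q)) from by ring]

lemma cp_factor' {ι₁ ι₂ ι₃ ι₄ : Type*} (S₁ : Finset ι₁) (S₂ : Finset ι₂) (S₃ : Finset ι₃)
    (S₄ : Finset ι₄) (α : ι₁ → k) (c : ι₁ → A) (β : ι₂ → k) (b2 : ι₂ → B)
    (γ : ι₃ → k) (a1 : ι₃ → A) (δ : ι₄ → k) (f : ι₄ → B) :
    ∑ r ∈ S₃, ∑ l ∈ S₄, ∑ i ∈ S₁, ∑ j ∈ S₂,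
      ((β j * α i) * (δ l * γ r)) • ((c i * a1 r) ⊗ₜ[k] (b2 j * f l)) =
    ((∑ i ∈ S₁, α i • c i) * (∑ r ∈ S₃, γ r • a1 r)) ⊗ₜ[k]
      ((∑ j ∈ S₂, β j • b2 j) * (∑ l ∈ S₄, δ l • f l)) := by
  calc ∑ r ∈ S₃, ∑ l ∈ S₄, ∑ i ∈ S₁, ∑ j ∈ S₂,
      ((β j * α i) * (δ l * γ r)) • ((c i * a1 r) ⊗ₜ[k] (b2 j * f l))
      = ∑ r ∈ S₃, ∑ i ∈ S₁, ∑ l ∈ S₄, ∑ j ∈ S₂,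
        ((β j * α i) * (δ l * γ r)) • ((c i * a1 r) ⊗ₜ[k] (b2 j * f l)) :=
        Finset.sum_congr rfl fun r _ => Finset.sum_comm
    _ = ∑ i ∈ S₁, ∑ r ∈ S₃, ∑ l ∈ S₄, ∑ j ∈ S₂,
        ((β j * α i) * (δ l * γ r)) • ((c i * a1 r) ⊗ₜ[k] (b2 j * f l)) :=
        Finset.sum_comm
    _ = ∑ i ∈ S₁, ∑ r ∈ S₃, ∑ j ∈ S₂, ∑ l ∈ S₄,
        ((β j * α i) * (δ l * γ r)) • ((c i * a1 r) ⊗ₜ[k] (b2 j * f l)) :=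
        Finset.sum_congr rfl fun i _ => Finset.sum_congr rfl fun r _ => Finset.sum_comm
    _ = ∑ i ∈ S₁, ∑ j ∈ S₂, ∑ r ∈ S₃, ∑ l ∈ S₄,
        ((β j * α i) * (δ l * γ r)) • ((c i * a1 r) ⊗ₜ[k] (b2 j * f l)) :=
        Finset.sum_congr rfl fun i _ => Finset.sum_comm
    _ = _ := cp_factor S₁ S₂ S₃ S₄ α c β b2 γ a1 δ f

lemma cp_main (ψ : B ⊗[k] A →ₗ[k] A ⊗[k] B) (φ : A ⊗[k] B →ₗ[k] B ⊗[k] A)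
    (h5 : (TensorProduct.lid k (A ⊗[k] B)).toLinearMap ∘ₗ
      TensorProduct.map (crossCounit (k := k) (A := A) (B := B))
        (LinearMap.id : A ⊗[k] B →ₗ[k] A ⊗[k] B) ∘ₗ crossComul φ = LinearMap.id)
    (hP : ∀ (b : B) (a : A), cpA (ψ (b ⊗ₜ[k] a)) = Coalgebra.counit (R := k) b • a)
    (hQ : ∀ (b : B) (a : A), cpB (ψ (b ⊗ₜ[k] a)) = Coalgebra.counit (R := k) a • b)
    (hmA : ∀ a a' : A, Coalgebra.counit (R := k) (a * a') =
      Coalgebra.counit (R := k) (1 : B) *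
        (Coalgebra.counit (R := k) a * Coalgebra.counit (R := k) a'))
    (hmB : ∀ b b' : B, Coalgebra.counit (R := k) (b * b') =
      Coalgebra.counit (R := k) (1 : A) *
        (Coalgebra.counit (R := k) b * Coalgebra.counit (R := k) b'))
    (hαβ : Coalgebra.counit (R := k) (1 : A) * Coalgebra.counit (R := k) (1 : B) = 1)
    (a : A) (b : B) :
    TensorProduct.map (cpA (k := k)) (cpB (k := k))
      ((TensorProduct.map (crossMul ψ) (crossMul ψ))
        ((TensorProduct.tensorTensorTensorComm k (A ⊗[k] B) (A ⊗[k] B) (A ⊗[k] B) (A ⊗[k] B))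
          ((crossComul φ ((1 : A) ⊗ₜ[k] b)) ⊗ₜ[k] (crossComul φ (a ⊗ₜ[k] (1 : B)))))) =
      a ⊗ₜ[k] b := by
  rw [crossComul_repr φ (Coalgebra.Repr.arbitrary k (1 : A)) (Coalgebra.Repr.arbitrary k b),
    crossComul_repr φ (Coalgebra.Repr.arbitrary k a) (Coalgebra.Repr.arbitrary k (1 : B))]
  set r1 := Coalgebra.Repr.arbitrary k (1 : A)
  set rb := Coalgebra.Repr.arbitrary k b
  set ra := Coalgebra.Repr.arbitrary k a
  set r2 := Coalgebra.Repr.arbitrary k (1 : B)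
  simp only [TensorProduct.sum_tmul, TensorProduct.tmul_sum, map_sum]
  simp only [cp_quad ψ hP hQ hmA hmB, cp_d6 φ h5, hαβ, one_mul]
  rw [cp_factor' r1.index rb.index ra.index r2.index
    (fun i => Coalgebra.counit (R := k) (r1.right i)) r1.left
    (fun j => Coalgebra.counit (R := k) (rb.left j)) rb.right
    (fun r => Coalgebra.counit (R := k) (ra.right r)) ra.left
    (fun l => Coalgebra.counit (R := k) (r2.left l)) r2.right,
    repr_counit_right_smul r1, repr_counit_right_smul ra,
    repr_counit_left_smul rb, repr_counit_left_smul r2, one_mul, mul_one]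

end CPaux

/-- in a cross product bialgebra, `ψ` is left and right conormal if and only
if `ψ` is the flip map. -/
theorem psi_conormal_iff_flip (ψ : B ⊗[k] A →ₗ[k] A ⊗[k] B)
    (φ : A ⊗[k] B →ₗ[k] B ⊗[k] A) (H : IsCrossBialgebra ψ φ) :
    ((∀ (b : B) (a : A),
        (TensorProduct.lid k B)
          ((TensorProduct.map (Coalgebra.counit (R := k) (A := A))
            (LinearMap.id : B →ₗ[k] B)) (ψ (b ⊗ₜ[k] a))) =
          Coalgebra.counit (R := k) a • b) ∧
      (∀ (b : B) (a : A),
        (TensorProduct.rid k A)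
          ((TensorProduct.map (LinearMap.id : A →ₗ[k] A)
            (Coalgebra.counit (R := k) (A := B))) (ψ (b ⊗ₜ[k] a))) =
          Coalgebra.counit (R := k) b • a)) ↔
    ψ = (TensorProduct.comm k B A).toLinearMap := by
  constructor
  · rintro ⟨h1, h2⟩
    obtain ⟨hassoc, hul, hur, hcoass, h5, h6, h7, h8, hcm, hcc⟩ := H
    have hP : ∀ (b : B) (a : A), cpA (ψ (b ⊗ₜ[k] a)) = Coalgebra.counit (R := k) b • a := by
      intro b a; simpa [cpA] using h2 b a
    have hQ : ∀ (b : B) (a : A), cpB (ψ (b ⊗ₜ[k] a)) = Coalgebra.counit (R := k) a • b := by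
      intro b a; simpa [cpB] using h1 b a
    have hu1 : ∀ a : A, ψ ((1 : B) ⊗ₜ[k] a) = a ⊗ₜ[k] (1 : B) := by
      intro a
      have h := hul (a ⊗ₜ[k] (1 : B))
      rwa [crossMul_tmul, LinearMap.mulLeft_one, LinearMap.mulRight_one,
        TensorProduct.map_id, LinearMap.id_apply] at h
    have hu2 : ∀ b : B, ψ (b ⊗ₜ[k] (1 : A)) = (1 : A) ⊗ₜ[k] b := by
      intro b
      have h := hur ((1 : A) ⊗ₜ[k] b)
      rwa [crossMul_tmul, LinearMap.mulLeft_one, LinearMap.mulRight_one,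
        TensorProduct.map_id, LinearMap.id_apply] at h
    have hαβ : Coalgebra.counit (R := k) (1 : A) * Coalgebra.counit (R := k) (1 : B) = 1 := by
      rw [crossCounit_tmul] at h8; exact h8
    have hεμ : ∀ x y : A ⊗[k] B,
        crossCounit (k := k) (crossMul ψ (x ⊗ₜ[k] y)) =
          crossCounit (k := k) x * crossCounit (k := k) y := by
      intro x y
      have h := LinearMap.congr_fun hcc (x ⊗ₜ[k] y)
      simpa [LinearMap.mul'_apply] using h
    have hmA : ∀ a a' : A, Coalgebra.counit (R := k) (a * a') =
        Coalgebra.counit (R := k) (1 : B) *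
          (Coalgebra.counit (R := k) a * Coalgebra.counit (R := k) a') := by
      intro a a'
      have h10 := hεμ (a ⊗ₜ[k] (1 : B)) (a' ⊗ₜ[k] (1 : B))
      rw [crossMul_tmul, hu1, TensorProduct.map_tmul, LinearMap.mulLeft_apply,
        LinearMap.mulRight_apply, mul_one, crossCounit_tmul, crossCounit_tmul,
        crossCounit_tmul] at h10
      linear_combination Coalgebra.counit (R := k) (1 : A) * h10 -
        (Coalgebra.counit (R := k) (a * a') - Coalgebra.counit (R := k) (1 : B) *
          (Coalgebra.counit (R := k) a * Coalgebra.counit (R := k) a')) * hαβ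
    have hmB : ∀ b b' : B, Coalgebra.counit (R := k) (b * b') =
        Coalgebra.counit (R := k) (1 : A) *
          (Coalgebra.counit (R := k) b * Coalgebra.counit (R := k) b') := by
      intro b b'
      have h10 := hεμ ((1 : A) ⊗ₜ[k] b) ((1 : A) ⊗ₜ[k] b')
      rw [crossMul_tmul, hu2, TensorProduct.map_tmul, LinearMap.mulLeft_apply,
        LinearMap.mulRight_apply, mul_one, crossCounit_tmul, crossCounit_tmul,
        crossCounit_tmul] at h10
      linear_combination Coalgebra.counit (R := k) (1 : B) * h10 -
        (Coalgebra.counit (R := k) (b * b') - Coalgebra.counit (R := k) (1 : A) *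
          (Coalgebra.counit (R := k) b * Coalgebra.counit (R := k) b')) * hαβ
    apply TensorProduct.ext'
    intro b a
    rw [LinearEquiv.coe_coe, TensorProduct.comm_tmul]
    have h9 := LinearMap.congr_fun hcm (((1 : A) ⊗ₜ[k] b) ⊗ₜ[k] (a ⊗ₜ[k] (1 : B)))
    simp only [LinearMap.comp_apply, LinearEquiv.coe_coe] at h9
    rw [crossMul_tmul, LinearMap.mulLeft_one, LinearMap.mulRight_one,
      TensorProduct.map_id, LinearMap.id_apply, TensorProduct.map_tmul] at h9
    have h9' := congrArg (TensorProduct.map (cpA (k := k)) (cpB (k := k))) h9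
    rw [cp_hF φ h5] at h9'
    rw [h9']
    exact cp_main ψ φ h5 hP hQ hmA hmB hαβ a b
  · intro hψ
    subst hψ
    constructor <;> intro b a <;>
      simp [TensorProduct.comm_tmul, TensorProduct.lid_tmul, TensorProduct.rid_tmul,
        LinearEquiv.coe_coe]
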